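/- For every integer t ≥ 3, there exist a finite simple graph G and an induced subgraph H of G such that z(G) = 2 and z(H) = t. In particular, the z-chromatic number is not monotone under taking induced subgraphs. -/

import Mathlib

/-- A proper vertex coloring of `G` using exactly the colors `{1, …, k}`:
every vertex gets a color in `{1, …, k}`, adjacent vertices get different
colors, and every color in `{1, …, k}` is used. -/
def IsProperColoring {V : Type*} (G : SimpleGraph V) (k : ℕ) (c : V → ℕ) : Prop :=
  (∀ v, c v ∈ Finset.Icc 1 k) ∧
  (∀ u v, G.Adj u v → c u ≠ c v) ∧
  (∀ i ∈ Finset.Icc 1 k, ∃ v, c v = i)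

/-- A Grundy coloring of `G` using `k` colors: a proper coloring using `k` colors
such that every vertex of color `j` has, for each color `i < j`, a neighbor of color `i`. -/
def IsGrundyColoring {V : Type*} (G : SimpleGraph V) (k : ℕ) (c : V → ℕ) : Prop :=
  IsProperColoring G k c ∧
  ∀ v, ∀ i ∈ Finset.Icc 1 k, i < c v → ∃ w, G.Adj v w ∧ c w = i

/-- In a coloring `c` of `G` with colors `{1, …, k}`, a vertex `v` is color-dominating
if for every color `j ∈ {1, …, k}` different from the color of `v`, the vertex `v`
has a neighbor of color `j`. -/
def IsCDVertex {V : Type*} (G : SimpleGraph V) (k : ℕ) (c : V → ℕ) (v : V) : Prop :=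
  ∀ j ∈ Finset.Icc 1 k, j ≠ c v → ∃ w, G.Adj v w ∧ c w = j

/-- A color-dominating coloring (b-coloring) of `G` using `k` colors: a proper coloring
using `k` colors in which every color class contains a color-dominating vertex. -/
def IsBColoring {V : Type*} (G : SimpleGraph V) (k : ℕ) (c : V → ℕ) : Prop :=
  IsProperColoring G k c ∧
  ∀ i ∈ Finset.Icc 1 k, ∃ v, c v = i ∧ IsCDVertex G k c v

/-- A z-coloring of `G` using `k` colors: a proper coloring which is simultaneously
a Grundy coloring and a color-dominating coloring, and which admits color-dominating
vertices `u 1, …, u k` with `c (u j) = j` such that `u k` is adjacent to each `u j`, `j ≠ k`. -/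
def IsZColoring {V : Type*} (G : SimpleGraph V) (k : ℕ) (c : V → ℕ) : Prop :=
  IsGrundyColoring G k c ∧ IsBColoring G k c ∧
  ∃ u : ℕ → V,
    (∀ j ∈ Finset.Icc 1 k, c (u j) = j ∧ IsCDVertex G k c (u j)) ∧
    (∀ j ∈ Finset.Icc 1 k, j ≠ k → G.Adj (u k) (u j))

/-- The Grundy number of `G`: the maximum `k` such that `G` admits a Grundy coloring
using `k` colors. -/
noncomputable def grundyNumber {V : Type*} (G : SimpleGraph V) : ℕ :=
  sSup {k | ∃ c : V → ℕ, IsGrundyColoring G k c}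

/-- The b-chromatic number of `G`: the maximum `k` such that `G` admits a b-coloring
using `k` colors. -/
noncomputable def bNumber {V : Type*} (G : SimpleGraph V) : ℕ :=
  sSup {k | ∃ c : V → ℕ, IsBColoring G k c}

/-- The z-chromatic number of `G`: the maximum `k` such that `G` admits a z-coloring
using `k` colors. -/
noncomputable def zNumber {V : Type*} (G : SimpleGraph V) : ℕ :=
  sSup {k | ∃ c : V → ℕ, IsZColoring G k c}

namespace S11

abbrev Vt (t : ℕ) : Type := (Fin t ⊕ Unit) ⊕ (Fin t ⊕ Unit)

def cross {t : ℕ} : Fin t ⊕ Unit → Fin t ⊕ Unit → Prop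
  | .inl s, .inl r => s ≠ r
  | _, _ => True

def Gt (t : ℕ) : SimpleGraph (Vt t) where
  Adj u v :=
    match u, v with
    | .inl p, .inr q => cross p q
    | .inr q, .inl p => cross p q
    | .inl _, .inl _ => False
    | .inr _, .inr _ => False
  symm := by
    constructor
    rintro (p | q) (p' | q') h
    · exact h.elim
    · exact h
    · exact h
    · exact h.elim
  loopless := by constructor; rintro (p | q) h <;> exact h.elim

lemma adj_ab {t : ℕ} {i j : Fin t} :
    (Gt t).Adj (.inl (.inl i)) (.inr (.inl j)) ↔ i ≠ j := Iff.rfl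

lemma adj_ba {t : ℕ} {i j : Fin t} :
    (Gt t).Adj (.inr (.inl j)) (.inl (.inl i)) ↔ i ≠ j := Iff.rfl

lemma adj_px {t : ℕ} (p : Fin t ⊕ Unit) :
    (Gt t).Adj (.inl p) (.inr (.inr ())) := by cases p <;> trivial

lemma adj_yq {t : ℕ} (q : Fin t ⊕ Unit) :
    (Gt t).Adj (.inr q) (.inl (.inr ())) := by cases q <;> trivial

lemma not_adj_ll {t : ℕ} (p p' : Fin t ⊕ Unit) :
    ¬ (Gt t).Adj (.inl p) (.inl p') := fun h => h

lemma not_adj_rr {t : ℕ} (q q' : Fin t ⊕ Unit) :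
    ¬ (Gt t).Adj (.inr q) (.inr q') := fun h => h

end S11

namespace S11

lemma ubG (t k : ℕ) (c : Vt t → ℕ) (h : IsZColoring (Gt t) k c) : k ≤ 2 := by
  by_contra hk
  push_neg at hk
  obtain ⟨⟨⟨hrange, hadj, _⟩, _⟩, _, u, hu1, hu2⟩ := h
  -- x := .inr (.inr ()), y := .inl (.inr ())
  have classX : ∀ p : Fin t ⊕ Unit, c (.inl p) ≠ c (.inr (.inr ())) :=
    fun p => hadj _ _ (adj_px p)
  have classY : ∀ q : Fin t ⊕ Unit, c (.inr q) ≠ c (.inl (.inr ())) :=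
    fun q => hadj _ _ (adj_yq q)
  have hxk : 1 ≤ c (.inr (.inr ())) ∧ c (.inr (.inr ())) ≤ k := by
    have := hrange (.inr (.inr ())); rw [Finset.mem_Icc] at this; exact this
  have hyk : 1 ≤ c (.inl (.inr ())) ∧ c (.inl (.inr ())) ≤ k := by
    have := hrange (.inl (.inr ())); rw [Finset.mem_Icc] at this; exact this
  match hk' : u k with
  | .inl pk =>
    -- show c y = k
    have hy : c (.inl (.inr ())) = k := by
      by_contra hne
      have hA := hu2 (c (.inl (.inr ()))) (hrange _) hne
      rw [hk'] at hA
      have h1 := (hu1 (c (.inl (.inr ()))) (hrange _)).1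
      match hq : u (c (.inl (.inr ()))) with
      | .inl p' => rw [hq] at hA; exact not_adj_ll _ _ hA
      | .inr q => rw [hq] at h1; exact classY q h1
    set i := c (.inr (.inr ())) with hi
    have hik : i ≠ k := by
      intro hcon
      exact classX (.inr ()) (by rw [hy, ← hcon])
    obtain ⟨m, hm_mem, hmk, hmi⟩ : ∃ m, m ∈ Finset.Icc 1 k ∧ m ≠ k ∧ m ≠ i := by
      rcases eq_or_ne i 1 with h1 | h1
      · exact ⟨2, by rw [Finset.mem_Icc]; omega, by omega, by omega⟩
      · exact ⟨1, by rw [Finset.mem_Icc]; omega, by omega, by omega⟩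
    have hum := hu1 m hm_mem
    have hA := hu2 m hm_mem hmk
    rw [hk'] at hA
    match hq : u m with
    | .inl p' => rw [hq] at hA; exact not_adj_ll _ _ hA
    | .inr (.inr _) =>
      have h1 := hum.1
      rw [hq] at h1
      exact hmi (by rw [← h1])
    | .inr (.inl r) =>
      have hcd := hum.2
      rw [hq] at hcd
      have hne : i ≠ c (Sum.inr (Sum.inl r) : Vt t) := by
        have h1 := hum.1; rw [hq] at h1; rw [h1]; exact fun hh => hmi hh.symm
      obtain ⟨w, hw_adj, hw_c⟩ := hcd i (hrange _) hne
      match hw : w with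
      | .inr q' => exact not_adj_rr _ _ hw_adj
      | .inl p' => exact classX p' hw_c
  | .inr qk =>
    have hx : c (.inr (.inr ())) = k := by
      by_contra hne
      have hA := hu2 (c (.inr (.inr ()))) (hrange _) hne
      rw [hk'] at hA
      have h1 := (hu1 (c (.inr (.inr ()))) (hrange _)).1
      match hq : u (c (.inr (.inr ()))) with
      | .inr q' => rw [hq] at hA; exact not_adj_rr _ _ hA
      | .inl p => rw [hq] at h1; exact classX p h1
    set i := c (.inl (.inr ())) with hi
    have hik : i ≠ k := by
      intro hcon
      exact classY (.inr ()) (by rw [hx, ← hcon])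
    obtain ⟨m, hm_mem, hmk, hmi⟩ : ∃ m, m ∈ Finset.Icc 1 k ∧ m ≠ k ∧ m ≠ i := by
      rcases eq_or_ne i 1 with h1 | h1
      · exact ⟨2, by rw [Finset.mem_Icc]; omega, by omega, by omega⟩
      · exact ⟨1, by rw [Finset.mem_Icc]; omega, by omega, by omega⟩
    have hum := hu1 m hm_mem
    have hA := hu2 m hm_mem hmk
    rw [hk'] at hA
    match hq : u m with
    | .inr q' => rw [hq] at hA; exact not_adj_rr _ _ hA
    | .inl (.inr _) =>
      have h1 := hum.1
      rw [hq] at h1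
      exact hmi (by rw [← h1])
    | .inl (.inl s) =>
      have hcd := hum.2
      rw [hq] at hcd
      have hne : i ≠ c (Sum.inl (Sum.inl s) : Vt t) := by
        have h1 := hum.1; rw [hq] at h1; rw [h1]; exact fun hh => hmi hh.symm
      obtain ⟨w, hw_adj, hw_c⟩ := hcd i (hrange _) hne
      match hw : w with
      | .inl p' => exact not_adj_ll _ _ hw_adj
      | .inr q' => exact classY q' hw_c

end S11

namespace S11

def cG (t : ℕ) : Vt t → ℕ := Sum.elim (fun _ => 1) (fun _ => 2)

lemma zcG (t : ℕ) (ht : 3 ≤ t) : IsZColoring (Gt t) 2 (cG t) := by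
  have hprop : IsProperColoring (Gt t) 2 (cG t) := by
    refine ⟨?_, ?_, ?_⟩
    · rintro (p | q) <;> simp [cG]
    · rintro (p | q) (p' | q') h
      · exact absurd h (not_adj_ll _ _)
      · simp [cG]
      · simp [cG]
      · exact absurd h (not_adj_rr _ _)
    · intro i hi
      rw [Finset.mem_Icc] at hi
      rcases (by omega : i = 1 ∨ i = 2) with h | h <;> subst h
      · exact ⟨.inl (.inr ()), rfl⟩
      · exact ⟨.inr (.inr ()), rfl⟩
  have hcd : ∀ v : Vt t, IsCDVertex (Gt t) 2 (cG t) v := by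
    rintro (p | q) j hj hne <;> rw [Finset.mem_Icc] at hj
    · -- c = 1, so j = 2 : need a right neighbor
      have hj2 : j = 2 := by simp [cG] at hne; omega
      subst hj2
      exact ⟨.inr (.inr ()), adj_px p, rfl⟩
    · have hj1 : j = 1 := by simp [cG] at hne; omega
      subst hj1
      exact ⟨.inl (.inr ()), adj_yq q, rfl⟩
  refine ⟨⟨hprop, ?_⟩, ⟨hprop, ?_⟩, ?_⟩
  · -- Grundy
    rintro (p | q) i hi hlt
    · simp only [cG, Sum.elim_inl] at hlt
      rw [Finset.mem_Icc] at hi; omega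
    · simp only [cG, Sum.elim_inr] at hlt
      rw [Finset.mem_Icc] at hi
      have hi1 : i = 1 := by omega
      subst hi1
      exact ⟨.inl (.inr ()), (adj_yq q).symm, rfl⟩
  · intro i hi
    rw [Finset.mem_Icc] at hi
    rcases (by omega : i = 1 ∨ i = 2) with h | h <;> subst h
    · exact ⟨.inl (.inr ()), rfl, hcd _⟩
    · exact ⟨.inr (.inr ()), rfl, hcd _⟩
  · refine ⟨fun j => if j = 2 then .inr (.inr ()) else .inl (.inr ()), ?_, ?_⟩
    · intro j hj
      rw [Finset.mem_Icc] at hj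
      have : j = 1 ∨ j = 2 := by omega
      rcases this with h | h <;> subst h <;> simp <;> exact ⟨rfl, hcd _⟩
    · intro j hj hne
      rw [Finset.mem_Icc] at hj
      have : j = 1 := by omega
      subst this
      simp only [if_pos rfl, if_neg (by omega : (1:ℕ) ≠ 2)]
      exact adj_yq (.inr ())

lemma zG (t : ℕ) (ht : 3 ≤ t) : zNumber (Gt t) = 2 := by
  have hmem : 2 ∈ {k | ∃ c : Vt t → ℕ, IsZColoring (Gt t) k c} := ⟨cG t, zcG t ht⟩
  have hub : ∀ k ∈ {k | ∃ c : Vt t → ℕ, IsZColoring (Gt t) k c}, k ≤ 2 := by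
    rintro k ⟨c, hc⟩
    exact ubG t k c hc
  exact le_antisymm (csSup_le ⟨2, hmem⟩ hub) (le_csSup ⟨2, hub⟩ hmem)

/-! The induced subgraph -/

def St (t : ℕ) : Set (Vt t) := {v | match v with
  | .inl (.inl _) => True
  | .inr (.inl _) => True
  | _ => False}

lemma mem_a {t : ℕ} (i : Fin t) : (Sum.inl (Sum.inl i) : Vt t) ∈ St t := trivial
lemma mem_b {t : ℕ} (i : Fin t) : (Sum.inr (Sum.inl i) : Vt t) ∈ St t := trivial

def aH {t : ℕ} (i : Fin t) : ↥(St t) := ⟨.inl (.inl i), mem_a i⟩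
def bH {t : ℕ} (i : Fin t) : ↥(St t) := ⟨.inr (.inl i), mem_b i⟩

lemma St_cases {t : ℕ} (v : ↥(St t)) : (∃ i, v = aH i) ∨ (∃ i, v = bH i) := by
  obtain ⟨w, hw⟩ := v
  match w with
  | .inl (.inl i) => exact .inl ⟨i, rfl⟩
  | .inr (.inl i) => exact .inr ⟨i, rfl⟩
  | .inl (.inr _) => exact hw.elim
  | .inr (.inr _) => exact hw.elim

lemma adjH_ab {t : ℕ} {i j : Fin t} :
    ((Gt t).induce (St t)).Adj (aH i) (bH j) ↔ i ≠ j := Iff.rfl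

lemma adjH_ba {t : ℕ} {i j : Fin t} :
    ((Gt t).induce (St t)).Adj (bH j) (aH i) ↔ i ≠ j := Iff.rfl

lemma not_adjH_aa {t : ℕ} (i j : Fin t) :
    ¬ ((Gt t).induce (St t)).Adj (aH i) (aH j) := fun h => h

lemma not_adjH_bb {t : ℕ} (i j : Fin t) :
    ¬ ((Gt t).induce (St t)).Adj (bH i) (bH j) := fun h => h

def cH (t : ℕ) : ↥(St t) → ℕ := fun v =>
  match v.1 with
  | .inl (.inl i) => i.1 + 1
  | .inr (.inl i) => i.1 + 1
  | _ => 0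

lemma cH_a {t : ℕ} (i : Fin t) : cH t (aH i) = i.1 + 1 := rfl
lemma cH_b {t : ℕ} (i : Fin t) : cH t (bH i) = i.1 + 1 := rfl


lemma zcH (t : ℕ) (ht : 3 ≤ t) : IsZColoring ((Gt t).induce (St t)) t (cH t) := by
  have hprop : IsProperColoring ((Gt t).induce (St t)) t (cH t) := by
    refine ⟨?_, ?_, ?_⟩
    · intro v
      rcases St_cases v with ⟨i, rfl⟩ | ⟨i, rfl⟩ <;>
        · rw [Finset.mem_Icc]
          constructor
          · simp [cH_a, cH_b]
          · have := i.2
            simp only [cH_a, cH_b]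
            omega
    · intro u v huv
      rcases St_cases u with ⟨i, rfl⟩ | ⟨i, rfl⟩ <;>
        rcases St_cases v with ⟨j, rfl⟩ | ⟨j, rfl⟩
      · exact absurd huv (not_adjH_aa i j)
      · have : i ≠ j := adjH_ab.1 huv
        simp only [cH_a, cH_b]
        intro hcon
        exact this (Fin.ext (by omega))
      · have : j ≠ i := adjH_ba.1 huv
        simp only [cH_a, cH_b]
        intro hcon
        exact this (Fin.ext (by omega))
      · exact absurd huv (not_adjH_bb i j)
    · intro i hi
      rw [Finset.mem_Icc] at hi
      refine ⟨aH ⟨i - 1, by omega⟩, ?_⟩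
      simp only [cH_a]
      omega
  have hcd : ∀ v : ↥(St t), IsCDVertex ((Gt t).induce (St t)) t (cH t) v := by
    intro v j hj hne
    rw [Finset.mem_Icc] at hj
    rcases St_cases v with ⟨i, rfl⟩ | ⟨i, rfl⟩
    · refine ⟨bH ⟨j - 1, by omega⟩, adjH_ab.2 ?_, by simp only [cH_b]; omega⟩
      rw [cH_a] at hne
      intro hcon
      rw [Fin.ext_iff] at hcon
      simp only at hcon
      omega
    · refine ⟨aH ⟨j - 1, by omega⟩, adjH_ba.2 ?_, by simp only [cH_a]; omega⟩
      rw [cH_b] at hne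
      intro hcon
      rw [Fin.ext_iff] at hcon
      simp only at hcon
      omega
  refine ⟨⟨hprop, ?_⟩, ⟨hprop, ?_⟩, ?_⟩
  · -- Grundy
    intro v i hi hlt
    rw [Finset.mem_Icc] at hi
    rcases St_cases v with ⟨p, rfl⟩ | ⟨p, rfl⟩
    · rw [cH_a] at hlt
      refine ⟨bH ⟨i - 1, by omega⟩, adjH_ab.2 ?_, by simp only [cH_b]; omega⟩
      intro hcon
      rw [Fin.ext_iff] at hcon
      simp only at hcon
      omega
    · rw [cH_b] at hlt
      refine ⟨aH ⟨i - 1, by omega⟩, adjH_ba.2 ?_, by simp only [cH_a]; omega⟩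
      intro hcon
      rw [Fin.ext_iff] at hcon
      simp only at hcon
      omega
  · intro i hi
    rw [Finset.mem_Icc] at hi
    exact ⟨aH ⟨i - 1, by omega⟩, by simp only [cH_a]; omega, hcd _⟩
  · refine ⟨fun j => if h : 1 ≤ j ∧ j < t then bH ⟨j - 1, by omega⟩ else aH ⟨t - 1, by omega⟩,
      ?_, ?_⟩
    · intro j hj
      rw [Finset.mem_Icc] at hj
      by_cases h : 1 ≤ j ∧ j < t
      · simp only [dif_pos h]
        exact ⟨by simp only [cH_b]; omega, hcd _⟩
      · simp only [dif_neg h]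
        have : j = t := by omega
        subst this
        exact ⟨by simp only [cH_a]; omega, hcd _⟩
    · intro j hj hne
      rw [Finset.mem_Icc] at hj
      simp only [dif_neg (by omega : ¬ (1 ≤ t ∧ t < t)), dif_pos (by omega : 1 ≤ j ∧ j < t)]
      refine adjH_ab.2 ?_
      intro hcon
      rw [Fin.ext_iff] at hcon
      simp only at hcon
      omega

lemma ubH (t : ℕ) (ht : 3 ≤ t) (k : ℕ) (c : ↥(St t) → ℕ)
    (h : IsZColoring ((Gt t).induce (St t)) k c) : k ≤ t := by
  by_contra hk
  push_neg at hk
  obtain ⟨⟨⟨hrange, hadj, _⟩, hgrundy⟩, _, u, hu1, _⟩ := h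
  have hk_mem : k ∈ Finset.Icc 1 k := by rw [Finset.mem_Icc]; omega
  have hck : c (u k) = k := (hu1 k hk_mem).1
  -- build a function from colors 1..k-1 into Fin t
  rcases St_cases (u k) with ⟨p, hp⟩ | ⟨p, hp⟩
  · have key : ∀ i : ℕ, ∃ r : Fin t, i ∈ Finset.Icc 1 (k - 1) →
        (r ≠ p ∧ c (bH r) = i) := by
      intro i
      by_cases hi : i ∈ Finset.Icc 1 (k - 1)
      · rw [Finset.mem_Icc] at hi
        obtain ⟨w, hw_adj, hw_c⟩ := hgrundy (u k) i (by rw [Finset.mem_Icc]; omega)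
          (by rw [hck]; omega)
        rw [hp] at hw_adj
        rcases St_cases w with ⟨r, hr⟩ | ⟨r, hr⟩
        · rw [hr] at hw_adj; exact absurd hw_adj (not_adjH_aa _ _)
        · refine ⟨r, fun _ => ⟨?_, ?_⟩⟩
          · rw [hr] at hw_adj
            exact fun hc => (adjH_ab.1 hw_adj) hc.symm
          · rw [← hr]; exact hw_c
      · exact ⟨⟨0, by omega⟩, fun hcon => absurd hcon hi⟩
    choose f hf using key
    have hmaps : ∀ i ∈ Finset.Icc 1 (k - 1), f i ∈ Finset.univ.erase p := by
      intro i hi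
      exact Finset.mem_erase.2 ⟨(hf i hi).1, Finset.mem_univ _⟩
    have hcard : (Finset.univ.erase p).card < (Finset.Icc 1 (k - 1)).card := by
      rw [Finset.card_erase_of_mem (Finset.mem_univ _), Finset.card_univ,
        Fintype.card_fin, Nat.card_Icc]
      omega
    obtain ⟨i, hi, i', hi', hne, heq⟩ :=
      Finset.exists_ne_map_eq_of_card_lt_of_maps_to hcard hmaps
    have h1 := (hf i hi).2
    have h2 := (hf i' hi').2
    rw [heq] at h1
    rw [h1] at h2
    exact hne h2
  · have key : ∀ i : ℕ, ∃ r : Fin t, i ∈ Finset.Icc 1 (k - 1) →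
        (r ≠ p ∧ c (aH r) = i) := by
      intro i
      by_cases hi : i ∈ Finset.Icc 1 (k - 1)
      · rw [Finset.mem_Icc] at hi
        obtain ⟨w, hw_adj, hw_c⟩ := hgrundy (u k) i (by rw [Finset.mem_Icc]; omega)
          (by rw [hck]; omega)
        rw [hp] at hw_adj
        rcases St_cases w with ⟨r, hr⟩ | ⟨r, hr⟩
        · refine ⟨r, fun _ => ⟨?_, ?_⟩⟩
          · rw [hr] at hw_adj
            exact fun hc => (adjH_ba.1 hw_adj) hc
          · rw [← hr]; exact hw_c
        · rw [hr] at hw_adj; exact absurd hw_adj (not_adjH_bb _ _)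
      · exact ⟨⟨0, by omega⟩, fun hcon => absurd hcon hi⟩
    choose f hf using key
    have hmaps : ∀ i ∈ Finset.Icc 1 (k - 1), f i ∈ Finset.univ.erase p := by
      intro i hi
      exact Finset.mem_erase.2 ⟨(hf i hi).1, Finset.mem_univ _⟩
    have hcard : (Finset.univ.erase p).card < (Finset.Icc 1 (k - 1)).card := by
      rw [Finset.card_erase_of_mem (Finset.mem_univ _), Finset.card_univ,
        Fintype.card_fin, Nat.card_Icc]
      omega
    obtain ⟨i, hi, i', hi', hne, heq⟩ :=
      Finset.exists_ne_map_eq_of_card_lt_of_maps_to hcard hmaps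
    have h1 := (hf i hi).2
    have h2 := (hf i' hi').2
    rw [heq] at h1
    rw [h1] at h2
    exact hne h2

lemma zH (t : ℕ) (ht : 3 ≤ t) : zNumber ((Gt t).induce (St t)) = t := by
  have hmem : t ∈ {k | ∃ c : ↥(St t) → ℕ, IsZColoring ((Gt t).induce (St t)) k c} :=
    ⟨cH t, zcH t ht⟩
  have hub : ∀ k ∈ {k | ∃ c : ↥(St t) → ℕ, IsZColoring ((Gt t).induce (St t)) k c}, k ≤ t := by
    rintro k ⟨c, hc⟩
    exact ubH t ht k c hc
  exact le_antisymm (csSup_le ⟨t, hmem⟩ hub) (le_csSup ⟨t, hub⟩ hmem)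

end S11

/-- For every `t ≥ 3` there are a finite simple graph `G` and an induced
subgraph `H` of `G` with `z(G) = 2` and `z(H) = t`; the z-chromatic number is not
monotone under taking induced subgraphs. -/
theorem statement_11 (t : ℕ) (ht : 3 ≤ t) :
    ∃ (V : Type) (_ : Fintype V) (G : SimpleGraph V) (s : Set V),
      zNumber G = 2 ∧ zNumber (G.induce s) = t := by
  exact ⟨S11.Vt t, inferInstance, S11.Gt t, S11.St t, S11.zG t ht, S11.zH t ht⟩
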